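/- (Anosov) Let (X, μ) be a measurable space with a finite measure μ, F : X → X measurable with μ invariant, and γ ∈ L¹(X, μ). If there is a measurable function φ : X → ℝ satisfying φ(F x) − φ(x) = γ(x) for all x ∈ X, then φ(F^n x)/n → 0 as n → ∞ for μ-almost every x ∈ X, and consequently ∫_X γ dμ = 0. -/

import Mathlib

open MeasureTheory Filter
set_option linter.unusedSectionVars false

section Anosov
variable {X : Type*} [MeasurableSpace X]

/-- Birkhoff sum. -/
def birk (F : X → X) (g : X → ℝ) (n : ℕ) (x : X) : ℝ :=
  ∑ k ∈ Finset.range n, g (F^[k] x)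

lemma birk_zero (F : X → X) (g : X → ℝ) (x : X) : birk F g 0 x = 0 := by
  simp [birk]

lemma birk_succ (F : X → X) (g : X → ℝ) (n : ℕ) (x : X) :
    birk F g (n + 1) x = birk F g n x + g (F^[n] x) := Finset.sum_range_succ _ _

lemma birk_succ' (F : X → X) (g : X → ℝ) (n : ℕ) (x : X) :
    birk F g (n + 1) x = g x + birk F g n (F x) := by
  rw [birk, Finset.sum_range_succ', add_comm]
  simp [birk, Function.iterate_succ_apply]

lemma birk_telescope {F : X → X} {γ φ : X → ℝ} (hsol : ∀ x, φ (F x) - φ x = γ x)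
    (n : ℕ) (x : X) : birk F γ n x = φ (F^[n] x) - φ x := by
  induction n with
  | zero => simp [birk]
  | succ n ih =>
      rw [birk_succ, ih, Function.iterate_succ_apply', ← hsol (F^[n] x)]
      ring

lemma birk_measurable {F : X → X} (hF : Measurable F) {g : X → ℝ} (hg : Measurable g)
    (n : ℕ) : Measurable (birk F g n) :=
  Finset.measurable_sum _ fun k _ => hg.comp (hF.iterate k)

lemma birk_integrable {μ : Measure X} (hmp : MeasurePreserving F μ μ) {g : X → ℝ}
    (hg : Integrable g μ) (n : ℕ) : Integrable (birk F g n) μ := by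
  refine integrable_finset_sum _ fun k _ => ?_
  exact ((hmp.iterate k).integrable_comp hg.aestronglyMeasurable).2 hg

lemma birk_neg (F : X → X) (g : X → ℝ) (n : ℕ) (x : X) :
    birk F (fun y => -g y) n x = -birk F g n x := by
  simp [birk]

/-- running maximum of Birkhoff sums. -/
def maxS (F : X → X) (g : X → ℝ) : ℕ → X → ℝ
  | 0 => fun _ => 0
  | n + 1 => fun x => max (maxS F g n x) (birk F g (n + 1) x)

lemma maxS_nonneg (F : X → X) (g : X → ℝ) (n : ℕ) (x : X) : 0 ≤ maxS F g n x := by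
  induction n with
  | zero => simp [maxS]
  | succ n ih => exact le_trans ih (le_max_left _ _)

lemma maxS_mono (F : X → X) (g : X → ℝ) (n : ℕ) (x : X) :
    maxS F g n x ≤ maxS F g (n + 1) x := le_max_left _ _

lemma birk_le_maxS (F : X → X) (g : X → ℝ) {k n : ℕ} (h : k ≤ n) (x : X) :
    birk F g k x ≤ maxS F g n x := by
  induction n with
  | zero => interval_cases k; simp [birk, maxS]
  | succ n ih =>
      rcases Nat.lt_or_ge k (n + 1) with h' | h'
      · exact le_trans (ih (Nat.lt_succ_iff.mp h')) (maxS_mono F g n x)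
      · have : k = n + 1 := le_antisymm h h'
        subst this
        exact le_max_right _ _

lemma maxS_measurable {F : X → X} (hF : Measurable F) {g : X → ℝ} (hg : Measurable g)
    (n : ℕ) : Measurable (maxS F g n) := by
  induction n with
  | zero => exact measurable_const
  | succ n ih => exact ih.max (birk_measurable hF hg (n + 1))

lemma maxS_integrable {μ : Measure X} (hmp : MeasurePreserving F μ μ) {g : X → ℝ}
    (hg : Integrable g μ) (n : ℕ) : Integrable (maxS F g n) μ := by
  induction n with
  | zero => exact integrable_zero _ _ _
  | succ n ih =>
      have := ih.sup (birk_integrable hmp hg (n + 1))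
      exact this

lemma maxS_key (F : X → X) (g : X → ℝ) (n : ℕ) (x : X) :
    maxS F g n x ≤ max 0 (g x + maxS F g n (F x)) := by
  induction n with
  | zero => exact le_max_left _ _
  | succ n ih =>
      refine max_le ?_ ?_
      · exact le_trans ih (max_le_max le_rfl (by
          have := maxS_mono F g n (F x); linarith))
      · rw [birk_succ']
        refine le_trans ?_ (le_max_right _ _)
        have : birk F g n (F x) ≤ maxS F g (n + 1) (F x) :=
          birk_le_maxS F g (Nat.le_succ n) (F x)
        linarith

lemma maxS_pos_exists (F : X → X) (g : X → ℝ) (n : ℕ) (x : X)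
    (h : 0 < maxS F g n x) : ∃ k, 1 ≤ k ∧ k ≤ n ∧ 0 < birk F g k x := by
  induction n with
  | zero => simp [maxS] at h
  | succ n ih =>
      rcases le_or_gt (maxS F g n x) (birk F g (n + 1) x) with h' | h'
      · exact ⟨n + 1, Nat.succ_le_succ (Nat.zero_le n), le_rfl,
          lt_of_lt_of_le h (by simpa [maxS] using max_le h' le_rfl)⟩
      · have : 0 < maxS F g n x := by
          have : maxS F g (n+1) x = maxS F g n x := max_eq_left h'.le
          rwa [this] at h
        obtain ⟨k, h1, h2, h3⟩ := ih this
        exact ⟨k, h1, le_trans h2 (Nat.le_succ n), h3⟩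


/-- Hopf–Garsia maximal ergodic lemma. -/
lemma hopf {μ : Measure X} [IsFiniteMeasure μ] {F : X → X}
    (hmp : MeasurePreserving F μ μ) {g : X → ℝ} (hgm : Measurable g)
    (hgi : Integrable g μ) :
    0 ≤ ∫ x in {x | ∃ k, 1 ≤ k ∧ 0 < birk F g k x}, g x ∂μ := by
  set E : Set X := {x | ∃ k, 1 ≤ k ∧ 0 < birk F g k x} with hE
  set En : ℕ → Set X := fun n => {x | 0 < maxS F g n x} with hEn
  have hEnm : ∀ n, MeasurableSet (En n) := fun n =>
    measurableSet_lt measurable_const (maxS_measurable hmp.measurable hgm n)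
  have hEm : MeasurableSet E := by
    have : E = ⋃ n, En n := by
      ext x
      constructor
      · rintro ⟨k, hk1, hkpos⟩
        exact Set.mem_iUnion.2 ⟨k, lt_of_lt_of_le hkpos (birk_le_maxS F g le_rfl x)⟩
      · intro hx
        obtain ⟨n, hn⟩ := Set.mem_iUnion.1 hx
        obtain ⟨k, h1, _, h3⟩ := maxS_pos_exists F g n x hn
        exact ⟨k, h1, h3⟩
    rw [this]; exact MeasurableSet.iUnion hEnm
  -- step 1 : for each n, 0 ≤ ∫_{En n} g
  have step1 : ∀ n, 0 ≤ ∫ x in En n, g x ∂μ := by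
    intro n
    have hMi : Integrable (maxS F g n) μ := maxS_integrable hmp hgi n
    have hMFi : Integrable (fun x => maxS F g n (F x)) μ :=
      (hmp.integrable_comp hMi.aestronglyMeasurable).2 hMi
    have hptwise : ∀ x ∈ En n, maxS F g n x - maxS F g n (F x) ≤ g x := by
      intro x hx
      have h1 : 0 < maxS F g n x := hx
      have h2 := maxS_key F g n x
      have h3 : maxS F g n x ≤ g x + maxS F g n (F x) := by
        rcases max_cases (0:ℝ) (g x + maxS F g n (F x)) with ⟨he, hc⟩ | ⟨he, hc⟩
        · rw [he] at h2; linarith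
        · rwa [he] at h2
      linarith
    have hint : ∫ x in En n, (maxS F g n x - maxS F g n (F x)) ∂μ ≤ ∫ x in En n, g x ∂μ := by
      refine setIntegral_mono_on ((hMi.sub hMFi).integrableOn) hgi.integrableOn (hEnm n) ?_
      intro x hx; exact hptwise x hx
    have heq1 : ∫ x in En n, maxS F g n x ∂μ = ∫ x, maxS F g n x ∂μ := by
      refine setIntegral_eq_integral_of_forall_compl_eq_zero ?_
      intro x hx
      have h0 : ¬ 0 < maxS F g n x := hx
      have := maxS_nonneg F g n x
      linarith
    have hle2 : ∫ x in En n, maxS F g n (F x) ∂μ ≤ ∫ x, maxS F g n (F x) ∂μ := by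
      refine setIntegral_le_integral hMFi ?_
      exact Eventually.of_forall fun x => maxS_nonneg F g n (F x)
    have heq3 : ∫ x, maxS F g n (F x) ∂μ = ∫ x, maxS F g n x ∂μ := by
      rw [← integral_map hmp.measurable.aemeasurable
        (by rw [hmp.map_eq]; exact hMi.aestronglyMeasurable), hmp.map_eq]
    have hsplit : ∫ x in En n, (maxS F g n x - maxS F g n (F x)) ∂μ
        = ∫ x in En n, maxS F g n x ∂μ - ∫ x in En n, maxS F g n (F x) ∂μ :=
      integral_sub hMi.integrableOn hMFi.integrableOn
    have : 0 ≤ ∫ x in En n, (maxS F g n x - maxS F g n (F x)) ∂μ := by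
      rw [hsplit, heq1]
      have := hle2.trans_eq heq3
      linarith
    linarith
  -- step 2 : pass to the limit
  have hmono : ∀ n, En n ⊆ En (n + 1) := by
    intro n x hx
    exact lt_of_lt_of_le hx (maxS_mono F g n x)
  have hmono' : Monotone En := monotone_nat_of_le_succ hmono
  have hEU : E = ⋃ n, En n := by
    ext x
    constructor
    · rintro ⟨k, hk1, hkpos⟩
      exact Set.mem_iUnion.2 ⟨k, lt_of_lt_of_le hkpos (birk_le_maxS F g le_rfl x)⟩
    · intro hx
      obtain ⟨n, hn⟩ := Set.mem_iUnion.1 hx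
      obtain ⟨k, h1, _, h3⟩ := maxS_pos_exists F g n x hn
      exact ⟨k, h1, h3⟩
  have htendsto : Tendsto (fun n => ∫ x, (En n).indicator g x ∂μ) atTop
      (nhds (∫ x, E.indicator g x ∂μ)) := by
    refine tendsto_integral_of_dominated_convergence (fun x => |g x|)
      (fun n => (hgm.indicator (hEnm n)).aestronglyMeasurable)
      hgi.abs ?_ ?_
    · intro n
      refine Eventually.of_forall fun x => ?_
      by_cases hx : x ∈ En n
      · rw [Set.indicator_of_mem hx]; simp [Real.norm_eq_abs]
      · rw [Set.indicator_of_notMem hx]; simp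
    · refine Eventually.of_forall fun x => ?_
      by_cases hx : x ∈ E
      · have : ∃ n, x ∈ En n := by rw [hEU] at hx; exact Set.mem_iUnion.1 hx
        obtain ⟨n₀, hn₀⟩ := this
        have : ∀ n ≥ n₀, (En n).indicator g x = E.indicator g x := by
          intro n hn
          rw [Set.indicator_of_mem (hmono' hn hn₀), Set.indicator_of_mem hx]
        exact tendsto_const_nhds.congr' (eventually_atTop.2 ⟨n₀, fun n hn => (this n hn).symm⟩)
      · have : ∀ n, (En n).indicator g x = E.indicator g x := by
          intro n
          have hxn : x ∉ En n := fun h => hx (by rw [hEU]; exact Set.mem_iUnion.2 ⟨n, h⟩)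
          rw [Set.indicator_of_notMem hxn, Set.indicator_of_notMem hx]
        simpa [this] using tendsto_const_nhds
  have hnn : 0 ≤ ∫ x, E.indicator g x ∂μ := by
    refine ge_of_tendsto htendsto (Eventually.of_forall fun n => ?_)
    rw [integral_indicator (hEnm n)]
    exact step1 n
  rwa [integral_indicator hEm] at hnn


lemma iterate_preimage {F : X → X} {A : Set X} (hAinv : F ⁻¹' A = A) (k : ℕ) :
    F^[k] ⁻¹' A = A := by
  induction k with
  | zero => simp
  | succ k ih => rw [Function.iterate_succ, Set.preimage_comp, ih, hAinv]

lemma vanish {μ : Measure X} [IsFiniteMeasure μ] {F : X → X}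
    (hmp : MeasurePreserving F μ μ)
    {γ : X → ℝ} (hγm : Measurable γ) (hγ : Integrable γ μ)
    {φ : X → ℝ} (hφm : Measurable φ) (hsol : ∀ x, φ (F x) - φ x = γ x)
    {A : Set X} (hAm : MeasurableSet A) (hAinv : F ⁻¹' A = A) :
    ∫ x in A, γ x ∂μ = 0 := by
  have hF : Measurable F := hmp.measurable
  set I := ∫ x in A, γ x ∂μ with hI
  -- step A : shifting under the dynamics does not change the set integral
  have stepA : ∀ k : ℕ, ∫ x in A, γ (F^[k] x) ∂μ = I := by
    intro k
    have hiter := hmp.iterate k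
    have hAk : F^[k] ⁻¹' A = A := iterate_preimage hAinv k
    have hcomp : A.indicator (fun x => γ (F^[k] x)) = (A.indicator γ) ∘ F^[k] := by
      funext x
      by_cases hx : x ∈ A
      · have hx' : F^[k] x ∈ A := by rw [← hAk] at hx; exact hx
        simp [Set.indicator_of_mem hx, Set.indicator_of_mem hx', Function.comp]
      · have hx' : F^[k] x ∉ A := fun h => hx (by rw [← hAk]; exact h)
        simp [Set.indicator_of_notMem hx, Set.indicator_of_notMem hx', Function.comp]
    have hsm : AEStronglyMeasurable (A.indicator γ) (Measure.map F^[k] μ) := by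
      rw [hiter.map_eq]; exact (hγm.indicator hAm).aestronglyMeasurable
    calc ∫ x in A, γ (F^[k] x) ∂μ
        = ∫ x, A.indicator (fun x => γ (F^[k] x)) x ∂μ := (integral_indicator hAm).symm
      _ = ∫ x, (A.indicator γ) (F^[k] x) ∂μ := by rw [hcomp]; rfl
      _ = ∫ y, A.indicator γ y ∂(Measure.map F^[k] μ) :=
          (integral_map hiter.measurable.aemeasurable hsm).symm
      _ = ∫ y, A.indicator γ y ∂μ := by rw [hiter.map_eq]
      _ = I := integral_indicator hAm
  -- step B
  have hints : ∀ k : ℕ, Integrable (fun x => γ (F^[k] x)) μ := fun k =>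
    ((hmp.iterate k).integrable_comp hγ.aestronglyMeasurable).2 hγ
  have stepB : ∀ n : ℕ, ∫ x in A, birk F γ n x ∂μ = n * I := by
    intro n
    have : ∫ x in A, birk F γ n x ∂μ = ∑ k ∈ Finset.range n, ∫ x in A, γ (F^[k] x) ∂μ := by
      simp only [birk]
      exact integral_finset_sum _ fun k _ => (hints k).integrableOn
    rw [this]
    simp [stepA, Finset.sum_const]
  -- tail of φ
  have htail : ∀ δ : ℝ, 0 < δ →
      Tendsto (fun n : ℕ => μ {x | (n : ℝ) * δ ≤ |φ x|}) atTop (nhds 0) := by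
    intro δ hδ
    have hs : ∀ n : ℕ, MeasurableSet {x | (n : ℝ) * δ ≤ |φ x|} := fun n =>
      measurableSet_le measurable_const hφm.abs
    have hanti : Antitone fun n : ℕ => {x | (n : ℝ) * δ ≤ |φ x|} := by
      intro n m h x hx
      have : (n : ℝ) * δ ≤ (m : ℝ) * δ := by
        have : (n : ℝ) ≤ m := Nat.cast_le.2 h
        nlinarith
      exact le_trans this hx
    have hempty : ⋂ n : ℕ, {x | (n : ℝ) * δ ≤ |φ x|} = ∅ := by
      ext x
      simp only [Set.mem_iInter, Set.mem_setOf_eq, Set.mem_empty_iff_false, iff_false, not_forall]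
      obtain ⟨n, hn⟩ := exists_nat_gt (|φ x| / δ)
      refine ⟨n, ?_⟩
      rw [div_lt_iff₀ hδ] at hn
      linarith
    have := tendsto_measure_iInter_atTop (fun n => (hs n).nullMeasurableSet) hanti
      ⟨0, measure_ne_top μ _⟩
    rwa [hempty, measure_empty] at this
  -- measure of bad sets
  set Bset : ℕ → ℝ → Set X := fun n δ => {x | (n : ℝ) * δ ≤ |birk F γ n x|} with hBset
  have hBm : ∀ n δ, MeasurableSet (Bset n δ) := fun n δ =>
    measurableSet_le measurable_const (birk_measurable hF hγm n).abs
  have hBbound : ∀ (δ : ℝ), 0 < δ → ∀ n : ℕ,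
      μ (Bset n δ) ≤ 2 * μ {x | (n : ℝ) * δ / 2 ≤ |φ x|} := by
    intro δ hδ n
    have hsub : Bset n δ ⊆ (F^[n] ⁻¹' {y | (n : ℝ) * δ / 2 ≤ |φ y|}) ∪
        {x | (n : ℝ) * δ / 2 ≤ |φ x|} := by
      intro x hx
      have hb : (n : ℝ) * δ ≤ |φ (F^[n] x) - φ x| := by
        have := birk_telescope hsol n x
        rw [hBset] at hx
        simp only [Set.mem_setOf_eq] at hx
        rwa [this] at hx
      by_cases h1 : (n : ℝ) * δ / 2 ≤ |φ (F^[n] x)|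
      · exact Or.inl h1
      · right
        simp only [Set.mem_setOf_eq]
        push_neg at h1
        have := abs_sub_abs_le_abs_sub (φ (F^[n] x)) (φ x)
        have h2 := abs_sub (φ (F^[n] x)) (φ x)
        have := abs_abs_sub_abs_le_abs_sub (φ (F^[n] x)) (φ x)
        -- |φ x| ≥ |φ(Fⁿx) - φ x| - |φ (Fⁿ x)| ≥ nδ - nδ/2
        have h3 : |φ (F^[n] x) - φ x| ≤ |φ (F^[n] x)| + |φ x| := abs_sub _ _
        linarith
    calc μ (Bset n δ) ≤ μ ((F^[n] ⁻¹' {y | (n : ℝ) * δ / 2 ≤ |φ y|}) ∪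
          {x | (n : ℝ) * δ / 2 ≤ |φ x|}) := measure_mono hsub
      _ ≤ μ (F^[n] ⁻¹' {y | (n : ℝ) * δ / 2 ≤ |φ y|}) + μ {x | (n : ℝ) * δ / 2 ≤ |φ x|} :=
          measure_union_le _ _
      _ = 2 * μ {x | (n : ℝ) * δ / 2 ≤ |φ x|} := by
          rw [(hmp.iterate n).measure_preimage
            (measurableSet_le measurable_const hφm.abs).nullMeasurableSet]
          ring
  -- truncation
  have hKint : ∀ K : ℕ, Integrable (fun x => max (|γ x| - K) 0) μ := by
    intro K
    have := (hγ.abs.sub (integrable_const (K : ℝ))).sup (integrable_zero _ _ μ)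
    exact this
  have hKm : ∀ K : ℕ, Measurable (fun x => max (|γ x| - K) 0) := fun K =>
    (hγm.abs.sub measurable_const).max measurable_const
  have hKtendsto : Tendsto (fun K : ℕ => ∫ x, max (|γ x| - K) 0 ∂μ) atTop (nhds 0) := by
    have key : Tendsto (fun K : ℕ => ∫ x, max (|γ x| - K) 0 ∂μ) atTop
        (nhds (∫ _x, (0:ℝ) ∂μ)) := by
      refine tendsto_integral_of_dominated_convergence (fun x => |γ x|)
        (fun K => (hKm K).aestronglyMeasurable) hγ.abs ?_ ?_
      · intro K
        refine Eventually.of_forall fun x => ?_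
        have h1 : (0:ℝ) ≤ max (|γ x| - K) 0 := le_max_right _ _
        have hc : (0:ℝ) ≤ (K : ℝ) := Nat.cast_nonneg K
        have h2 : max (|γ x| - K) 0 ≤ |γ x| := max_le (by linarith) (abs_nonneg _)
        rw [Real.norm_eq_abs, abs_of_nonneg h1]
        exact h2
      · refine Eventually.of_forall fun x => ?_
        obtain ⟨N, hN⟩ := exists_nat_ge (|γ x|)
        refine tendsto_const_nhds.congr' (eventually_atTop.2 ⟨N, fun K hK => ?_⟩)
        have : |γ x| - K ≤ 0 := by
          have : (N : ℝ) ≤ K := Nat.cast_le.2 hK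
          linarith
        simp [max_eq_right this]
    simpa using key
  -- the main estimate
  have main : ∀ η : ℝ, 0 < η → |I| < η := by
    intro η hη
    obtain ⟨K, hK⟩ := (hKtendsto.eventually_lt_const (by positivity : (0:ℝ) < η / 3)).exists
    set m := (μ Set.univ).toReal with hm
    have hm0 : 0 ≤ m := ENNReal.toReal_nonneg
    set δ := η / (3 * (m + 1)) with hδdef
    have hδ : 0 < δ := by positivity
    have hδm : δ * m ≤ η / 3 := by
      rw [hδdef]
      rw [div_mul_eq_mul_div, div_le_div_iff₀ (by positivity) (by norm_num)]
      nlinarith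
    -- choose n
    have htend2 : Tendsto (fun n : ℕ => 2 * (K : ℝ) *
        (μ {x | (n : ℝ) * δ / 2 ≤ |φ x|}).toReal) atTop (nhds 0) := by
      have h1 : Tendsto (fun n : ℕ => (μ {x | (n : ℝ) * δ / 2 ≤ |φ x|}).toReal) atTop
          (nhds 0) := by
        have := (ENNReal.tendsto_toReal ENNReal.zero_ne_top).comp (htail (δ/2) (by positivity))
        simpa [Function.comp_def, mul_div_assoc] using this
      have := h1.const_mul (2 * (K : ℝ))
      simpa using this
    obtain ⟨n, hn1, hn3⟩ := ((htend2.eventually_lt_const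
      (by positivity : (0:ℝ) < η / 3)).and (eventually_ge_atTop 1)).exists
    -- bound ∫ |birk n|
    set fK : X → ℝ := fun y => max (|γ y| - K) 0 with hfK
    have hbirki : Integrable (birk F γ n) μ := birk_integrable hmp hγ n
    have hptwise : ∀ x, |birk F γ n x| ≤ (n : ℝ) * δ +
        ((∑ k ∈ Finset.range n, fK (F^[k] x)) +
          (Bset n δ).indicator (fun _ => (n : ℝ) * K) x) := by
      intro x
      have hsumnn : 0 ≤ ∑ k ∈ Finset.range n, fK (F^[k] x) :=
        Finset.sum_nonneg fun k _ => le_max_right _ _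
      by_cases hx : x ∈ Bset n δ
      · have h1 : |birk F γ n x| ≤ ∑ k ∈ Finset.range n, |γ (F^[k] x)| := by
          simpa [birk] using Finset.abs_sum_le_sum_abs (fun k => γ (F^[k] x)) (Finset.range n)
        have h2 : ∑ k ∈ Finset.range n, |γ (F^[k] x)| ≤
            ∑ k ∈ Finset.range n, (fK (F^[k] x) + K) := by
          refine Finset.sum_le_sum fun k _ => ?_
          have : |γ (F^[k] x)| - K ≤ fK (F^[k] x) := le_max_left _ _
          linarith
        rw [Set.indicator_of_mem hx]
        rw [Finset.sum_add_distrib, Finset.sum_const, Finset.card_range,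
          nsmul_eq_mul] at h2
        have : (0:ℝ) ≤ (n : ℝ) * δ := by positivity
        linarith
      · have hlt : |birk F γ n x| < (n : ℝ) * δ := by
          rw [hBset] at hx
          simp only [Set.mem_setOf_eq, not_le] at hx
          exact hx
        rw [Set.indicator_of_notMem hx]
        linarith
    have hfKcomp : ∀ k : ℕ, ∫ x, fK (F^[k] x) ∂μ = ∫ x, fK x ∂μ := by
      intro k
      have hiter := hmp.iterate k
      have hsm : AEStronglyMeasurable fK (Measure.map F^[k] μ) := by
        rw [hiter.map_eq]; exact (hKm K).aestronglyMeasurable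
      rw [← integral_map hiter.measurable.aemeasurable hsm, hiter.map_eq]
    have hfKcompint : ∀ k : ℕ, Integrable (fun x => fK (F^[k] x)) μ := fun k =>
      ((hmp.iterate k).integrable_comp (hKint K).aestronglyMeasurable).2 (hKint K)
    have hintbound : ∫ x, |birk F γ n x| ∂μ ≤
        m * ((n : ℝ) * δ) + ((n : ℝ) * ∫ x, fK x ∂μ +
          (μ (Bset n δ)).toReal * ((n : ℝ) * K)) := by
      have hint1 : Integrable (fun _ : X => (n : ℝ) * δ) μ := integrable_const _
      have hint2 : Integrable (fun x => ∑ k ∈ Finset.range n, fK (F^[k] x)) μ :=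
        integrable_finset_sum _ fun k _ => hfKcompint k
      have hint3 : Integrable ((Bset n δ).indicator (fun _ => (n : ℝ) * K)) μ :=
        (integrable_const _).indicator (hBm n δ)
      have hint23 : Integrable (fun x => (∑ k ∈ Finset.range n, fK (F^[k] x)) +
          (Bset n δ).indicator (fun _ => (n : ℝ) * K) x) μ := hint2.add hint3
      calc ∫ x, |birk F γ n x| ∂μ
          ≤ ∫ x, ((n : ℝ) * δ + ((∑ k ∈ Finset.range n, fK (F^[k] x)) +
              (Bset n δ).indicator (fun _ => (n : ℝ) * K) x)) ∂μ := by
            refine integral_mono hbirki.abs (hint1.add (hint2.add hint3)) ?_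
            intro x; exact hptwise x
        _ = m * ((n : ℝ) * δ) + ((n : ℝ) * ∫ x, fK x ∂μ +
              (μ (Bset n δ)).toReal * ((n : ℝ) * K)) := by
            rw [integral_add hint1 hint23, integral_add hint2 hint3,
              integral_const, integral_finset_sum _ (fun k _ => hfKcompint k),
              integral_indicator_const _ (hBm n δ)]
            simp only [hfKcomp, Finset.sum_const, Finset.card_range, smul_eq_mul,
              nsmul_eq_mul, measureReal_def, hm]
    -- assemble
    have habs : (n : ℝ) * |I| ≤ ∫ x, |birk F γ n x| ∂μ := by
      have h1 : |∫ x in A, birk F γ n x ∂μ| = (n : ℝ) * |I| := by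
        rw [stepB n, abs_mul, abs_of_nonneg (by positivity : (0:ℝ) ≤ (n:ℝ))]
      have h2 : |∫ x in A, birk F γ n x ∂μ| ≤ ∫ x in A, |birk F γ n x| ∂μ := by
        simpa [Real.norm_eq_abs] using
          norm_integral_le_integral_norm (μ := μ.restrict A) (birk F γ n)
      have h3 : ∫ x in A, |birk F γ n x| ∂μ ≤ ∫ x, |birk F γ n x| ∂μ :=
        setIntegral_le_integral hbirki.abs (Eventually.of_forall fun x => abs_nonneg _)
      linarith
    have hBreal : (μ (Bset n δ)).toReal * ((n : ℝ) * K) ≤ (n : ℝ) * (η / 3) := by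
      have hfin : μ {x | (n : ℝ) * δ / 2 ≤ |φ x|} ≠ ⊤ := measure_ne_top μ _
      have h1 : (μ (Bset n δ)).toReal ≤ (2 * μ {x | (n : ℝ) * δ / 2 ≤ |φ x|}).toReal := by
        refine ENNReal.toReal_mono ?_ (hBbound δ hδ n)
        exact ENNReal.mul_ne_top (by norm_num) hfin
      have h2 : (2 * μ {x | (n : ℝ) * δ / 2 ≤ |φ x|}).toReal =
          2 * (μ {x | (n : ℝ) * δ / 2 ≤ |φ x|}).toReal := by
        rw [ENNReal.toReal_mul]; norm_num
      have hK0 : (0:ℝ) ≤ (K : ℝ) := Nat.cast_nonneg K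
      have hn0 : (0:ℝ) ≤ (n : ℝ) := Nat.cast_nonneg n
      have hb2 : (μ (Bset n δ)).toReal ≤
          2 * (μ {x | (n : ℝ) * δ / 2 ≤ |φ x|}).toReal := h2 ▸ h1
      have hbK : (μ (Bset n δ)).toReal * (K : ℝ) ≤ η / 3 := by
        nlinarith [mul_le_mul_of_nonneg_right hb2 hK0]
      calc (μ (Bset n δ)).toReal * ((n : ℝ) * K)
          = (n : ℝ) * ((μ (Bset n δ)).toReal * K) := by ring
        _ ≤ (n : ℝ) * (η / 3) := mul_le_mul_of_nonneg_left hbK hn0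
    have hfirst : m * ((n : ℝ) * δ) ≤ (n : ℝ) * (η / 3) := by
      have hn0 : (0:ℝ) ≤ (n : ℝ) := Nat.cast_nonneg n
      nlinarith
    have hnpos : (0:ℝ) < n := by exact_mod_cast hn3
    have hsecond : (n : ℝ) * ∫ x, fK x ∂μ < (n : ℝ) * (η / 3) :=
      mul_lt_mul_of_pos_left hK hnpos
    have hstep : (n : ℝ) * |I| < (n : ℝ) * (η / 3 + (η / 3 + η / 3)) := by
      have : (n : ℝ) * (η / 3 + (η / 3 + η / 3)) =
          (n : ℝ) * (η / 3) + ((n : ℝ) * (η / 3) + (n : ℝ) * (η / 3)) := by ring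
      rw [this]
      linarith
    have hfinal : |I| < η / 3 + (η / 3 + η / 3) := (mul_lt_mul_iff_right₀ hnpos).1 hstep
    linarith
  have : |I| ≤ 0 := by
    by_contra h
    push_neg at h
    exact absurd (main |I| h) (lt_irrefl _)
  have := abs_nonneg I
  have hIzero : |I| = 0 := le_antisymm ‹|I| ≤ 0› (abs_nonneg I)
  exact abs_eq_zero.mp hIzero


lemma keyzero {μ : Measure X} [IsFiniteMeasure μ] {F : X → X}
    (hmp : MeasurePreserving F μ μ)
    {γ : X → ℝ} (hγm : Measurable γ) (hγ : Integrable γ μ)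
    {φ : X → ℝ} (hφm : Measurable φ) (hsol : ∀ x, φ (F x) - φ x = γ x)
    {ε : ℝ} (hε : 0 < ε) :
    μ {x | ∃ j : ℕ, ∀ N : ℕ, ∃ n : ℕ, N ≤ n ∧
      (n : ℝ) * (ε + ε / (j + 1)) ≤ birk F γ n x} = 0 := by
  have hF : Measurable F := hmp.measurable
  set e : ℕ → ℝ := fun j => ε + ε / (j + 1) with he
  have hepos : ∀ j : ℕ, ε < e j := by
    intro j
    have : (0:ℝ) < ε / (j + 1) := by positivity
    simp only [he]; linarith
  have hdpos : ∀ j : ℕ, 0 < e j - e (j + 1) := by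
    intro j
    have h1 : (0:ℝ) < (j:ℝ) + 1 := by positivity
    have : ε / ((j:ℝ) + 1 + 1) < ε / ((j:ℝ) + 1) :=
      div_lt_div_of_pos_left hε h1 (by linarith)
    simp only [he]
    push_cast
    linarith
  set A : Set X := {x | ∃ j : ℕ, ∀ N : ℕ, ∃ n : ℕ, N ≤ n ∧
      (n : ℝ) * e j ≤ birk F γ n x} with hA
  have hAm : MeasurableSet A := by
    have : A = ⋃ j : ℕ, ⋂ N : ℕ, ⋃ n : ℕ,
        ({_x : X | N ≤ n} ∩ {x | (n : ℝ) * e j ≤ birk F γ n x}) := by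
      ext x
      simp only [hA, Set.mem_setOf_eq, Set.mem_iUnion, Set.mem_iInter, Set.mem_inter_iff]
    rw [this]
    refine MeasurableSet.iUnion fun j => MeasurableSet.iInter fun N =>
      MeasurableSet.iUnion fun n => ?_
    exact (MeasurableSet.const _).inter
      (measurableSet_le measurable_const (birk_measurable hF hγm n))
  have hAinv : F ⁻¹' A = A := by
    apply Set.Subset.antisymm
    · -- F x ∈ A → x ∈ A
      rintro x ⟨j, hj⟩
      refine ⟨j + 1, fun N => ?_⟩
      obtain ⟨M₁, hM₁⟩ := exists_nat_ge ((e (j + 1) - γ x) / (e j - e (j + 1)))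
      have hM₁' : e (j + 1) - γ x ≤ (M₁ : ℝ) * (e j - e (j + 1)) := by
        rw [div_le_iff₀ (hdpos j)] at hM₁
        exact hM₁
      obtain ⟨m, hmN, hmb⟩ := hj (max N M₁)
      refine ⟨m + 1, le_trans (le_max_left N M₁) (le_trans hmN (Nat.le_succ m)), ?_⟩
      have hbs : birk F γ (m + 1) x = γ x + birk F γ m (F x) := birk_succ' F γ m x
      have hmM₁ : (M₁ : ℝ) ≤ (m : ℝ) := Nat.cast_le.2 (le_trans (le_max_right N M₁) hmN)
      have hkey : ((m : ℝ) + 1) * e (j + 1) ≤ γ x + (m : ℝ) * e j := by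
        have h1 : (M₁ : ℝ) * (e j - e (j + 1)) ≤ (m : ℝ) * (e j - e (j + 1)) :=
          mul_le_mul_of_nonneg_right hmM₁ (hdpos j).le
        nlinarith
      rw [hbs]
      push_cast
      calc ((m : ℝ) + 1) * e (j + 1) ≤ γ x + (m : ℝ) * e j := hkey
        _ ≤ γ x + birk F γ m (F x) := by linarith
    · -- x ∈ A → F x ∈ A
      rintro x ⟨j, hj⟩
      refine ⟨j + 1, fun N => ?_⟩
      obtain ⟨M₀, hM₀⟩ := exists_nat_ge (γ x / (e j - e (j + 1)))
      have hM₀' : γ x ≤ (M₀ : ℝ) * (e j - e (j + 1)) := by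
        rw [div_le_iff₀ (hdpos j)] at hM₀
        exact hM₀
      obtain ⟨m, hmN, hmb⟩ := hj (max (N + 1) M₀)
      have hm1 : 1 ≤ m := le_trans (le_trans (Nat.le_add_left 1 N) (le_max_left _ _)) hmN
      obtain ⟨n, rfl⟩ : ∃ n, m = n + 1 := ⟨m - 1, (Nat.succ_pred_eq_of_pos hm1).symm⟩
      have hnN : N ≤ n := by
        have : N + 1 ≤ n + 1 := le_trans (le_max_left _ _) hmN
        omega
      refine ⟨n, hnN, ?_⟩
      have hbs : birk F γ (n + 1) x = γ x + birk F γ n (F x) := birk_succ' F γ n x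
      rw [hbs] at hmb
      have hmM₀ : (M₀ : ℝ) ≤ (n : ℝ) + 1 := by
        have : (M₀ : ℕ) ≤ n + 1 := le_trans (le_max_right _ _) hmN
        exact_mod_cast this
      have h1 : (M₀ : ℝ) * (e j - e (j + 1)) ≤ ((n : ℝ) + 1) * (e j - e (j + 1)) :=
        mul_le_mul_of_nonneg_right hmM₀ (hdpos j).le
      have hd2 : (0:ℝ) < e (j + 1) := lt_trans hε (hepos (j+1))
      have hcast : ((n : ℝ) + 1) * e j ≤ γ x + birk F γ n (F x) := by
        push_cast at hmb; linarith
      nlinarith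
  -- the indicator cocycle
  set g : X → ℝ := A.indicator (fun x => γ x - ε) with hg
  have hgm : Measurable g := (hγm.sub measurable_const).indicator hAm
  have hgi : Integrable g μ := ((hγ.sub (integrable_const ε)).indicator hAm)
  have horb : ∀ k : ℕ, ∀ x, x ∈ A → F^[k] x ∈ A := by
    intro k x hx
    have := iterate_preimage hAinv k
    rw [← this] at hx
    exact hx
  have horb' : ∀ k : ℕ, ∀ x, x ∉ A → F^[k] x ∉ A := by
    intro k x hx h
    have := iterate_preimage hAinv k
    exact hx (by rw [← this]; exact h)
  have hbirkg_mem : ∀ x ∈ A, ∀ k : ℕ, birk F g k x = birk F γ k x - k * ε := by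
    intro x hx k
    have : ∀ i ∈ Finset.range k, g (F^[i] x) = γ (F^[i] x) - ε := fun i _ =>
      Set.indicator_of_mem (horb i x hx) _
    rw [birk, Finset.sum_congr rfl this, Finset.sum_sub_distrib, Finset.sum_const,
      Finset.card_range, nsmul_eq_mul]
    rfl
  have hbirkg_not : ∀ x, x ∉ A → ∀ k : ℕ, birk F g k x = 0 := by
    intro x hx k
    rw [birk]
    refine Finset.sum_eq_zero fun i _ => ?_
    exact Set.indicator_of_notMem (horb' i x hx) _
  have hE : {x | ∃ k, 1 ≤ k ∧ 0 < birk F g k x} = A := by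
    ext x
    constructor
    · rintro ⟨k, _, hk⟩
      by_contra hx
      rw [hbirkg_not x hx k] at hk
      exact lt_irrefl _ hk
    · intro hx
      obtain ⟨j, hj⟩ := id hx
      obtain ⟨n, hn1, hnb⟩ := hj 1
      refine ⟨n, hn1, ?_⟩
      rw [hbirkg_mem x hx n]
      have hn0 : (0:ℝ) < (n:ℝ) := by exact_mod_cast hn1
      have : (n : ℝ) * ε < (n : ℝ) * e j := mul_lt_mul_of_pos_left (hepos j) hn0
      linarith
  have hhopf := hopf hmp hgm hgi
  rw [hE] at hhopf
  have hgval : ∫ x in A, g x ∂μ = (∫ x in A, γ x ∂μ) - ε * (μ A).toReal := by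
    have h1 : ∫ x in A, g x ∂μ = ∫ x in A, (γ x - ε) ∂μ := by
      refine setIntegral_congr_fun hAm fun x hx => ?_
      exact Set.indicator_of_mem hx _
    rw [h1, integral_sub hγ.integrableOn (integrableOn_const (measure_lt_top μ A).ne),
      setIntegral_const]
    simp [mul_comm, measureReal_def]
  have hvan : ∫ x in A, γ x ∂μ = 0 := vanish hmp hγm hγ hφm hsol hAm hAinv
  rw [hgval, hvan] at hhopf
  have hAr : (μ A).toReal = 0 := by nlinarith [ENNReal.toReal_nonneg (a := μ A)]
  have := measure_ne_top μ A
  exact (ENNReal.toReal_eq_zero_iff _).1 hAr |>.resolve_right this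


end Anosov

/-- Anosov: if `μ` is a finite invariant measure, `γ ∈ L¹(X, μ)` and
`φ` is a measurable (not necessarily integrable) solution of the cohomological
equation, then `φ(F^n x)/n → 0` a.e. and `∫ γ dμ = 0`. -/
theorem anosov_trivial_necessary_condition
    {X : Type*} [MeasurableSpace X] (μ : Measure X) [IsFiniteMeasure μ]
    (F : X → X) (hF : Measurable F)
    (hinv : ∀ M : Set X, MeasurableSet M → μ (F ⁻¹' M) = μ M)
    (γ : X → ℝ) (hγ : Integrable γ μ)
    (φ : X → ℝ) (hφm : Measurable φ)
    (hsol : ∀ x, φ (F x) - φ x = γ x) :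
    (∀ᵐ x ∂μ, Tendsto (fun n : ℕ => φ (F^[n] x) / n) atTop (nhds 0)) ∧
    ∫ x, γ x ∂μ = 0 := by
  have hmp : MeasurePreserving F μ μ := by
    refine ⟨hF, Measure.ext fun s hs => ?_⟩
    rw [Measure.map_apply hF hs]
    exact hinv s hs
  have hγm : Measurable γ := by
    have : γ = fun x => φ (F x) - φ x := funext fun x => (hsol x).symm
    rw [this]
    exact (hφm.comp hF).sub hφm
  have hsol' : ∀ x, (fun y => -φ y) (F x) - (fun y => -φ y) x = -γ x := by
    intro x
    have := hsol x
    simp only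
    linarith
  -- the two families of bad sets
  set Ap : ℕ → Set X := fun m => {x | ∃ j : ℕ, ∀ N : ℕ, ∃ n : ℕ, N ≤ n ∧
      (n : ℝ) * ((1 / (m + 1)) + (1 / (m + 1)) / (j + 1)) ≤ birk F γ n x} with hAp
  set Am : ℕ → Set X := fun m => {x | ∃ j : ℕ, ∀ N : ℕ, ∃ n : ℕ, N ≤ n ∧
      (n : ℝ) * ((1 / (m + 1)) + (1 / (m + 1)) / (j + 1)) ≤
        birk F (fun y => -γ y) n x} with hAm'
  have hεpos : ∀ m : ℕ, (0:ℝ) < 1 / (m + 1) := by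
    intro m; positivity
  have hApnull : ∀ m, μ (Ap m) = 0 := fun m =>
    keyzero hmp hγm hγ hφm hsol (hεpos m)
  have hAmnull : ∀ m, μ (Am m) = 0 := fun m =>
    keyzero hmp hγm.neg hγ.neg hφm.neg hsol' (hεpos m)
  have hbad : μ ((⋃ m, Ap m) ∪ (⋃ m, Am m)) = 0 :=
    measure_union_null (measure_iUnion_null hApnull) (measure_iUnion_null hAmnull)
  constructor
  · -- a.e. convergence
    rw [ae_iff]
    refine measure_mono_null (fun x hx => ?_) hbad
    simp only [Set.mem_setOf_eq] at hx
    by_contra hxb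
    apply hx
    -- x is in no bad set
    have hxp : ∀ m, x ∉ Ap m := fun m h =>
      hxb (Set.mem_union_left _ (Set.mem_iUnion.2 ⟨m, h⟩))
    have hxm : ∀ m, x ∉ Am m := fun m h =>
      hxb (Set.mem_union_right _ (Set.mem_iUnion.2 ⟨m, h⟩))
    -- first : the Birkhoff averages tend to 0
    have hS : Tendsto (fun n : ℕ => birk F γ n x / n) atTop (nhds 0) := by
      rw [NormedAddCommGroup.tendsto_nhds_zero]
      intro η hη
      obtain ⟨m, hm⟩ := exists_nat_gt (2 / η)
      have hη2 : 2 / ((m : ℝ) + 1) < η := by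
        rw [div_lt_iff₀ (by positivity)]
        rw [div_lt_iff₀ hη] at hm
        nlinarith
      have h1 : x ∉ Ap m := hxp m
      have h2 : x ∉ Am m := hxm m
      simp only [hAp, hAm', Set.mem_setOf_eq] at h1 h2
      push_neg at h1 h2
      -- extract from j = 0
      obtain ⟨N₁, hN₁⟩ := h1 0
      obtain ⟨N₂, hN₂⟩ := h2 0
      rw [eventually_atTop]
      refine ⟨max (max N₁ N₂) 1, fun n hn => ?_⟩
      have hnN₁ : N₁ ≤ n := le_trans (le_trans (le_max_left _ _) (le_max_left _ _)) hn
      have hnN₂ : N₂ ≤ n := le_trans (le_trans (le_max_right _ _) (le_max_left _ _)) hn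
      have hn1 : 1 ≤ n := le_trans (le_max_right _ _) hn
      have hb1 := hN₁ n hnN₁
      have hb2 := hN₂ n hnN₂
      rw [birk_neg] at hb2
      have hcast : ((0:ℕ):ℝ) + 1 = 1 := by norm_cast
      have he0 : (1 / ((m:ℝ) + 1)) + (1 / ((m:ℝ) + 1)) / (((0:ℕ):ℝ) + 1) =
          2 / ((m:ℝ) + 1) := by
        rw [hcast]
        ring
      rw [he0] at hb1 hb2
      have hnpos : (0:ℝ) < n := by exact_mod_cast hn1
      have habs : |birk F γ n x| < (n:ℝ) * (2 / ((m:ℝ) + 1)) := by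
        rw [abs_lt]
        constructor
        · linarith
        · linarith
      rw [Real.norm_eq_abs, abs_div, abs_of_nonneg hnpos.le, div_lt_iff₀ hnpos]
      calc |birk F γ n x| < (n:ℝ) * (2 / ((m:ℝ) + 1)) := habs
        _ ≤ (n:ℝ) * η := by nlinarith
        _ = η * n := by ring
    -- now conclude for φ
    have heq : (fun n : ℕ => φ (F^[n] x) / n) =
        fun n : ℕ => φ x / n + birk F γ n x / n := by
      funext n
      rw [birk_telescope hsol n x]
      ring
    rw [heq]
    have := (tendsto_const_div_atTop_nhds_zero_nat (φ x)).add hS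
    simpa using this
  · -- the integral vanishes
    have := vanish hmp hγm hγ hφm hsol MeasurableSet.univ (by simp)
    rwa [setIntegral_univ] at this
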